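/- Let p, q, M, N be polynomials in three variables satisfying the identity p²N² = -pqN·∂_zM + pqM·∂_zN + q²N·∂_yM - q²M·∂_yN + q·∂ₓp·N² + z·q·∂_yp·N² + q·∂_zp·N·M - p·∂ₓq·N² - z·p·∂_yq·N² - p·∂_zq·N·M, with p, q, N nonzero. Write d_M, d_N, d_p, d_q for the total degrees. If d_M ≤ d_N + 1 then d_p ≤ d_q; if d_M > d_N + 1 then d_p ≤ d_q + d_M - d_N - 1. -/

import Mathlib

open MvPolynomial

namespace DegreeBoundsAux

noncomputable def L : MvPolynomial (Fin 3) ℝ →+* Polynomial (MvPolynomial (Fin 3) ℝ) :=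
  MvPolynomial.eval₂Hom (Polynomial.C.comp MvPolynomial.C)
    fun i => Polynomial.C (MvPolynomial.X i) * Polynomial.X

lemma L_monomial (d : Fin 3 →₀ ℕ) (a : ℝ) :
    L (monomial d a) = Polynomial.C (monomial d a) * Polynomial.X ^ (Finsupp.degree d) := by
  classical
  rw [L, eval₂Hom_monomial]
  rw [monomial_eq]
  simp only [RingHom.coe_comp, Function.comp_apply, map_mul]
  rw [Finsupp.prod, Finsupp.prod]
  rw [Finset.prod_congr rfl (fun i _ => mul_pow (Polynomial.C (X i)) Polynomial.X (d i))]
  rw [Finset.prod_mul_distrib, Finset.prod_pow_eq_pow_sum]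
  rw [Finsupp.degree, map_prod]
  simp [mul_assoc, map_pow]
  exact Or.inl (Or.inl rfl)

lemma L_coeff (f : MvPolynomial (Fin 3) ℝ) (n : ℕ) :
    (L f).coeff n = homogeneousComponent n f := by
  induction f using MvPolynomial.induction_on' with
  | monomial d a =>
    rw [L_monomial]
    ext m
    rw [Polynomial.coeff_C_mul, Polynomial.coeff_X_pow]
    rw [coeff_homogeneousComponent]
    simp only [coeff_monomial, mul_ite, mul_one, mul_zero]
    by_cases h1 : n = Finsupp.degree d <;> by_cases h2 : d = m <;>
      simp_all [eq_comm]
  | add f g hf hg => simp [map_add, hf, hg]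

variable {f g : MvPolynomial (Fin 3) ℝ}

lemma top_ne_zero (hf : f ≠ 0) : homogeneousComponent f.totalDegree f ≠ 0 := by
  obtain ⟨d, hd, hds⟩ := f.support.exists_mem_eq_sup
    (Finset.nonempty_iff_ne_empty.mpr (mt support_eq_empty.mp hf)) (fun s => s.sum fun _ e => e)
  have hcd : coeff d (homogeneousComponent f.totalDegree f) = coeff d f := by
    rw [coeff_homogeneousComponent, if_pos]
    rw [totalDegree, hds]; rfl
  intro h0
  rw [h0, coeff_zero] at hcd
  exact (mem_support_iff.mp hd) hcd.symm

lemma L_natDegree (hf : f ≠ 0) : (L f).natDegree = f.totalDegree := by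
  have hne : (L f).coeff f.totalDegree ≠ 0 := by
    rw [L_coeff]; exact top_ne_zero hf
  refine le_antisymm ?_ (Polynomial.le_natDegree_of_ne_zero hne)
  rw [Polynomial.natDegree_le_iff_coeff_eq_zero]
  intro m hm
  rw [L_coeff]
  exact homogeneousComponent_eq_zero m f hm
  -- note: homogeneousComponent_eq_zero (h : totalDegree < n)

lemma L_ne_zero (hf : f ≠ 0) : L f ≠ 0 := fun h => by
  have := L_coeff f f.totalDegree
  rw [h, Polynomial.coeff_zero] at this
  exact top_ne_zero hf this.symm

lemma totalDegree_mul_eq (hf : f ≠ 0) (hg : g ≠ 0) :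
    (f * g).totalDegree = f.totalDegree + g.totalDegree := by
  have h := Polynomial.natDegree_mul (L_ne_zero hf) (L_ne_zero hg)
  rw [← map_mul] at h
  rw [← L_natDegree (mul_ne_zero hf hg), h, L_natDegree hf, L_natDegree hg]

lemma deg3 (d : Fin 3 →₀ ℕ) : (d.sum fun _ e => e) = d 0 + d 1 + d 2 := by
  rw [Finsupp.sum, Finset.sum_subset (Finset.subset_univ _)
    (by intro x _ hx; simpa using (Finsupp.notMem_support_iff.mp hx))]
  rw [Fin.sum_univ_three]

lemma td_pderiv_le (i : Fin 3) (f : MvPolynomial (Fin 3) ℝ) :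
    (pderiv i f).totalDegree ≤ f.totalDegree - 1 := by
  classical
  have hrw : pderiv i f = ∑ v ∈ f.support, pderiv i (monomial v (coeff v f)) := by
    conv_lhs => rw [f.as_sum]
    rw [map_sum]
  rw [hrw]
  refine totalDegree_finsetSum_le fun v hv => ?_
  rw [pderiv_monomial]
  by_cases h0 : v i = 0
  · simp [h0]
  · refine (totalDegree_monomial_le _ _).trans ?_
    have hle : (v.sum fun _ e => e) ≤ f.totalDegree := le_totalDegree hv
    rw [deg3] at hle
    refine le_trans (le_of_eq (deg3 _)) ?_
    have e0 : ((v - Finsupp.single i 1 : Fin 3 →₀ ℕ)) 0 = v 0 - (Finsupp.single i 1) 0 :=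
      Finsupp.tsub_apply _ _ _
    have e1 : ((v - Finsupp.single i 1 : Fin 3 →₀ ℕ)) 1 = v 1 - (Finsupp.single i 1) 1 :=
      Finsupp.tsub_apply _ _ _
    have e2 : ((v - Finsupp.single i 1 : Fin 3 →₀ ℕ)) 2 = v 2 - (Finsupp.single i 1) 2 :=
      Finsupp.tsub_apply _ _ _
    fin_cases i <;> simp_all [e0, e1, e2, Finsupp.single_apply, Fin.ext_iff] <;> omega

lemma td_pderiv (i : Fin 3) (hpd : pderiv i f ≠ 0) :
    (pderiv i f).totalDegree + 1 ≤ f.totalDegree := by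
  have hA := td_pderiv_le i f
  have hB : 1 ≤ f.totalDegree := by
    by_contra hB
    apply hpd
    have h0 : f.totalDegree = 0 := by omega
    rw [totalDegree_eq_zero_iff] at h0
    classical
    have hrw : pderiv i f = ∑ v ∈ f.support, pderiv i (monomial v (coeff v f)) := by
      conv_lhs => rw [f.as_sum]
      rw [map_sum]
    rw [hrw]
    refine Finset.sum_eq_zero fun v hv => ?_
    simp [pderiv_monomial, h0 v hv i]
  omega

lemma tD_add {n : ℕ} (ha : f.totalDegree ≤ n) (hb : g.totalDegree ≤ n) :
    (f + g).totalDegree ≤ n := (totalDegree_add f g).trans (max_le ha hb)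

lemma tD_sub {n : ℕ} (ha : f.totalDegree ≤ n) (hb : g.totalDegree ≤ n) :
    (f - g).totalDegree ≤ n := (totalDegree_sub f g).trans (max_le ha hb)

end DegreeBoundsAux

open MvPolynomial in
/-- Degree bounds on σ = p/q: from the polynomial identity coming from the
determining equation, if deg M ≤ deg N + 1 then deg p ≤ deg q, and if
deg M > deg N + 1 then deg p ≤ deg q + deg M - deg N - 1. -/
theorem degree_bounds (M N p q : MvPolynomial (Fin 3) ℝ)
    (hp : p ≠ 0) (hq : q ≠ 0) (hN : N ≠ 0)
    (hid : p ^ 2 * N ^ 2 =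
      -(p * q * N * pderiv 2 M) + p * q * M * pderiv 2 N
        + q ^ 2 * N * pderiv 1 M - q ^ 2 * M * pderiv 1 N
        + q * pderiv 0 p * N ^ 2 + X 2 * q * pderiv 1 p * N ^ 2
        + q * pderiv 2 p * N * M
        - p * pderiv 0 q * N ^ 2 - X 2 * p * pderiv 1 q * N ^ 2
        - p * pderiv 2 q * N * M) :
    (M.totalDegree ≤ N.totalDegree + 1 → p.totalDegree ≤ q.totalDegree) ∧
    (M.totalDegree > N.totalDegree + 1 →
      p.totalDegree ≤ q.totalDegree + M.totalDegree - N.totalDegree - 1) := by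
  suffices h : p.totalDegree ≤ q.totalDegree + (M.totalDegree - N.totalDegree - 1) by
    constructor
    · intro hMN; omega
    · intro hMN; omega
  by_contra hcon
  push_neg at hcon
  -- notation
  set a := p.totalDegree with ha
  set b := q.totalDegree with hb
  set m := M.totalDegree with hm
  set n := N.totalDegree with hn
  set k := m - n - 1 with hk
  set B := a + b + 2 * n + k with hB
  -- degree of the left-hand side
  have hL : (p ^ 2 * N ^ 2).totalDegree = 2 * a + 2 * n := by
    have h1 : p ^ 2 * N ^ 2 = p * p * (N * N) := by ring
    rw [h1, DegreeBoundsAux.totalDegree_mul_eq (mul_ne_zero hp hp) (mul_ne_zero hN hN),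
      DegreeBoundsAux.totalDegree_mul_eq hp hp, DegreeBoundsAux.totalDegree_mul_eq hN hN]
    omega
  -- bounds for the ten terms
  have t1 : (p * q * N * pderiv 2 M).totalDegree ≤ B := by
    rcases eq_or_ne (pderiv 2 M) 0 with h | h
    · simp [h]
    · have h1 := DegreeBoundsAux.td_pderiv 2 h
      have h2 := totalDegree_mul (p * q * N) (pderiv 2 M)
      have h3 := totalDegree_mul (p * q) N
      have h4 := totalDegree_mul p q
      omega
  have t2 : (p * q * M * pderiv 2 N).totalDegree ≤ B := by
    rcases eq_or_ne (pderiv 2 N) 0 with h | h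
    · simp [h]
    · have h1 := DegreeBoundsAux.td_pderiv 2 h
      have h2 := totalDegree_mul (p * q * M) (pderiv 2 N)
      have h3 := totalDegree_mul (p * q) M
      have h4 := totalDegree_mul p q
      omega
  have t3 : (q ^ 2 * N * pderiv 1 M).totalDegree ≤ B := by
    rcases eq_or_ne (pderiv 1 M) 0 with h | h
    · simp [h]
    · have h1 := DegreeBoundsAux.td_pderiv 1 h
      have h2 := totalDegree_mul (q ^ 2 * N) (pderiv 1 M)
      have h3 := totalDegree_mul (q ^ 2) N
      have h4 := totalDegree_pow q 2
      omega
  have t4 : (q ^ 2 * M * pderiv 1 N).totalDegree ≤ B := by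
    rcases eq_or_ne (pderiv 1 N) 0 with h | h
    · simp [h]
    · have h1 := DegreeBoundsAux.td_pderiv 1 h
      have h2 := totalDegree_mul (q ^ 2 * M) (pderiv 1 N)
      have h3 := totalDegree_mul (q ^ 2) M
      have h4 := totalDegree_pow q 2
      omega
  have t5 : (q * pderiv 0 p * N ^ 2).totalDegree ≤ B := by
    rcases eq_or_ne (pderiv 0 p) 0 with h | h
    · simp [h]
    · have h1 := DegreeBoundsAux.td_pderiv 0 h
      have h2 := totalDegree_mul (q * pderiv 0 p) (N ^ 2)
      have h3 := totalDegree_mul q (pderiv 0 p)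
      have h4 := totalDegree_pow N 2
      omega
  have t6 : (X 2 * q * pderiv 1 p * N ^ 2).totalDegree ≤ B := by
    rcases eq_or_ne (pderiv 1 p) 0 with h | h
    · simp [h]
    · have h1 := DegreeBoundsAux.td_pderiv 1 h
      have h2 := totalDegree_mul (X 2 * q * pderiv 1 p) (N ^ 2)
      have h3 := totalDegree_mul (X (2 : Fin 3) * q) (pderiv 1 p)
      have h4 := totalDegree_mul (X (2 : Fin 3)) q
      have h5 := totalDegree_pow N 2
      have h6 : (X (2 : Fin 3) : MvPolynomial (Fin 3) ℝ).totalDegree = 1 := totalDegree_X 2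
      omega
  have t7 : (q * pderiv 2 p * N * M).totalDegree ≤ B := by
    rcases eq_or_ne (pderiv 2 p) 0 with h | h
    · simp [h]
    · have h1 := DegreeBoundsAux.td_pderiv 2 h
      have h2 := totalDegree_mul (q * pderiv 2 p * N) M
      have h3 := totalDegree_mul (q * pderiv 2 p) N
      have h4 := totalDegree_mul q (pderiv 2 p)
      omega
  have t8 : (p * pderiv 0 q * N ^ 2).totalDegree ≤ B := by
    rcases eq_or_ne (pderiv 0 q) 0 with h | h
    · simp [h]
    · have h1 := DegreeBoundsAux.td_pderiv 0 h
      have h2 := totalDegree_mul (p * pderiv 0 q) (N ^ 2)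
      have h3 := totalDegree_mul p (pderiv 0 q)
      have h4 := totalDegree_pow N 2
      omega
  have t9 : (X 2 * p * pderiv 1 q * N ^ 2).totalDegree ≤ B := by
    rcases eq_or_ne (pderiv 1 q) 0 with h | h
    · simp [h]
    · have h1 := DegreeBoundsAux.td_pderiv 1 h
      have h2 := totalDegree_mul (X 2 * p * pderiv 1 q) (N ^ 2)
      have h3 := totalDegree_mul (X (2 : Fin 3) * p) (pderiv 1 q)
      have h4 := totalDegree_mul (X (2 : Fin 3)) p
      have h5 := totalDegree_pow N 2
      have h6 : (X (2 : Fin 3) : MvPolynomial (Fin 3) ℝ).totalDegree = 1 := totalDegree_X 2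
      omega
  have t10 : (p * pderiv 2 q * N * M).totalDegree ≤ B := by
    rcases eq_or_ne (pderiv 2 q) 0 with h | h
    · simp [h]
    · have h1 := DegreeBoundsAux.td_pderiv 2 h
      have h2 := totalDegree_mul (p * pderiv 2 q * N) M
      have h3 := totalDegree_mul (p * pderiv 2 q) N
      have h4 := totalDegree_mul p (pderiv 2 q)
      omega
  have t1' : (-(p * q * N * pderiv 2 M)).totalDegree ≤ B := by
    rw [totalDegree_neg]; exact t1
  have hRB : (p ^ 2 * N ^ 2).totalDegree ≤ B := by
    rw [hid]
    exact DegreeBoundsAux.tD_sub (DegreeBoundsAux.tD_sub (DegreeBoundsAux.tD_sub (DegreeBoundsAux.tD_add (DegreeBoundsAux.tD_add (DegreeBoundsAux.tD_add (DegreeBoundsAux.tD_sub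
      (DegreeBoundsAux.tD_add (DegreeBoundsAux.tD_add t1' t2) t3) t4) t5) t6) t7) t8) t9) t10
  omega
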